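/- For the system ρ̇ = A ρ^{q-1} sin(qφ), φ̇ = μ + Ψ₁ρ² + A ρ^{q-2} cos(qφ) with Ψ(ρ)=Ψ₁ρ², q ≥ 5, A Ψ₁ > 0, and μ Ψ₁ < 0 with |μ| sufficiently small, there exist exactly 2q equilibria with ρ > 0 in the region ρ ∈ (0, δ) for suitable δ: for each of the 2q values φ with sin(qφ) = 0 there is exactly one ρ > 0 solving μ + Ψ₁ρ² + A ρ^{q-2} cos(qφ) = 0 near ρ = √(−μ/Ψ₁). -/

import Mathlib

private lemma pow_sub_pow_le_aux (x y : ℝ) (hx : 0 ≤ x) (hxy : x ≤ y) :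
    ∀ n : ℕ, y ^ (n + 1) - x ^ (n + 1) ≤ (n + 1) * y ^ n * (y - x) := by
  have hy : 0 ≤ y := hx.trans hxy
  intro n
  induction n with
  | zero => simp
  | succ n ih =>
    have h1 : x ^ (n + 1) ≤ y ^ (n + 1) := pow_le_pow_left₀ hx hxy (n + 1)
    have h2 : y * (y ^ (n + 1) - x ^ (n + 1)) ≤ y * ((n + 1) * y ^ n * (y - x)) :=
      mul_le_mul_of_nonneg_left ih hy
    have h3 : x ^ (n + 1) * (y - x) ≤ y ^ (n + 1) * (y - x) :=
      mul_le_mul_of_nonneg_right h1 (sub_nonneg.2 hxy)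
    have h4 : y ^ (n + 1 + 1) - x ^ (n + 1 + 1)
        = y * (y ^ (n + 1) - x ^ (n + 1)) + x ^ (n + 1) * (y - x) := by ring
    have h5 : y * (((n:ℝ) + 1) * y ^ n * (y - x)) = ((n:ℝ) + 1) * y ^ (n + 1) * (y - x) := by
      ring
    push_cast
    linarith

private lemma core (m : ℕ) (hm : 1 ≤ m) (A Ψ : ℝ) (hA : 0 < A) (hΨ : 0 < Ψ) :
    ∃ δ > 0, ∃ μ₀ > 0, ∀ μ : ℝ, μ < 0 → |μ| < μ₀ →
      ∀ c : ℝ, c = 1 ∨ c = -1 →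
        ∃! ρ : ℝ, ρ ∈ Set.Ioo 0 δ ∧ μ + Ψ * ρ ^ 2 + A * ρ ^ (m + 2) * c = 0 := by
  set δ : ℝ := min 1 (Ψ / (2 * A * (m + 2))) with hδdef
  have hm2 : (0:ℝ) < (m:ℝ) + 2 := by positivity
  have hδpos : 0 < δ := lt_min one_pos (by positivity)
  have hδ1 : δ ≤ 1 := min_le_left _ _
  have hδA : A * ((m:ℝ) + 2) * δ ≤ Ψ / 2 := by
    have h := min_le_right 1 (Ψ / (2 * A * (m + 2)))
    rw [← hδdef] at h
    calc A * ((m:ℝ) + 2) * δ ≤ A * ((m:ℝ) + 2) * (Ψ / (2 * A * (m + 2))) := by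
          apply mul_le_mul_of_nonneg_left h (by positivity)
      _ = Ψ / 2 := by field_simp
  refine ⟨δ, hδpos, Ψ / 2 * (δ / 2) ^ 2, by positivity, ?_⟩
  intro μ hμneg hμ c hc
  have hc1 : c = 1 ∨ c = -1 := hc
  have habsc : c ≤ 1 ∧ -1 ≤ c := by rcases hc with h | h <;> simp [h]
  -- pow bound: for 0 ≤ z ≤ δ, z^m ≤ δ
  have hpowm : ∀ z : ℝ, 0 ≤ z → z ≤ δ → z ^ m ≤ δ := by
    intro z hz hzδ
    calc z ^ m ≤ δ ^ m := pow_le_pow_left₀ hz hzδ m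
      _ ≤ δ ^ 1 := pow_le_pow_of_le_one hδpos.le hδ1 hm
      _ = δ := pow_one δ
  -- strict monotonicity of g z = Ψ z^2 + A z^(m+2) c on [0, δ]
  have hmono : ∀ x y : ℝ, 0 ≤ x → x < y → y ≤ δ →
      Ψ * x ^ 2 + A * x ^ (m + 2) * c < Ψ * y ^ 2 + A * y ^ (m + 2) * c := by
    intro x y hx hxy hyδ
    have hy : 0 < y := lt_of_le_of_lt hx hxy
    have hd : y ^ (m + 2) - x ^ (m + 2) ≤ ((m:ℝ) + 2) * y ^ (m + 1) * (y - x) := by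
      have := pow_sub_pow_le_aux x y hx hxy.le (m + 1)
      push_cast at this ⊢
      convert this using 2 <;> ring
    have hdnn : 0 ≤ y ^ (m + 2) - x ^ (m + 2) :=
      sub_nonneg.2 (pow_le_pow_left₀ hx hxy.le _)
    have hym1 : y ^ (m + 1) ≤ δ * y := by
      have : y ^ m ≤ δ := hpowm y hy.le hyδ
      calc y ^ (m + 1) = y ^ m * y := by ring
        _ ≤ δ * y := mul_le_mul_of_nonneg_right this hy.le
    -- A * (y^(m+2) - x^(m+2)) ≤ (Ψ/2) * y * (y - x)
    have hbound : A * (y ^ (m + 2) - x ^ (m + 2)) ≤ Ψ / 2 * y * (y - x) := by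
      calc A * (y ^ (m + 2) - x ^ (m + 2))
          ≤ A * (((m:ℝ) + 2) * y ^ (m + 1) * (y - x)) :=
            mul_le_mul_of_nonneg_left hd hA.le
        _ ≤ A * (((m:ℝ) + 2) * (δ * y) * (y - x)) := by
            apply mul_le_mul_of_nonneg_left _ hA.le
            apply mul_le_mul_of_nonneg_right _ (sub_nonneg.2 hxy.le)
            exact mul_le_mul_of_nonneg_left hym1 (by positivity)
        _ = (A * ((m:ℝ) + 2) * δ) * (y * (y - x)) := by ring
        _ ≤ Ψ / 2 * (y * (y - x)) := by
            apply mul_le_mul_of_nonneg_right hδA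
            have := sub_nonneg.2 hxy.le
            positivity
        _ = Ψ / 2 * y * (y - x) := by ring
    -- c * diff ≥ - diff
    have hcd : A * (y ^ (m + 2)) * c - A * (x ^ (m + 2)) * c
        ≥ -(A * (y ^ (m + 2) - x ^ (m + 2))) := by
      have h1 : A * (y ^ (m + 2)) * c - A * (x ^ (m + 2)) * c
          = (A * (y ^ (m + 2) - x ^ (m + 2))) * c := by ring
      rw [h1]
      nlinarith [mul_nonneg hA.le hdnn, habsc.2]
    have hΨdiff : Ψ * y ^ 2 - Ψ * x ^ 2 ≥ Ψ * y * (y - x) := by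
      nlinarith [mul_nonneg (mul_nonneg hΨ.le hx) (sub_nonneg.2 hxy.le)]
    have hpos : 0 < Ψ / 2 * y * (y - x) :=
      mul_pos (mul_pos (by linarith) hy) (sub_pos.2 hxy)
    linarith
  -- existence
  have hcont : Continuous fun ρ : ℝ => μ + Ψ * ρ ^ 2 + A * ρ ^ (m + 2) * c := by
    fun_prop
  have hf0 : μ + Ψ * (0:ℝ) ^ 2 + A * (0:ℝ) ^ (m + 2) * c < 0 := by
    simp [hμneg]
  have hμ' : -μ < Ψ / 2 * (δ / 2) ^ 2 := by
    rw [abs_of_neg hμneg] at hμ; exact hμ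
  have hfhalf : 0 < μ + Ψ * (δ / 2) ^ 2 + A * (δ / 2) ^ (m + 2) * c := by
    have h1 : A * (δ / 2) ^ (m + 2) ≤ Ψ / 2 * (δ / 2) ^ 2 := by
      have h2 : (δ / 2) ^ m ≤ δ := hpowm _ (by positivity) (by linarith)
      have h3 : A * (δ / 2) ^ (m + 2) = A * (δ / 2) ^ m * (δ / 2) ^ 2 := by ring
      rw [h3]
      apply mul_le_mul_of_nonneg_right _ (by positivity)
      calc A * (δ / 2) ^ m ≤ A * δ := mul_le_mul_of_nonneg_left h2 hA.le
        _ ≤ Ψ / 2 := by nlinarith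
    have h4 : A * (δ / 2) ^ (m + 2) * c ≥ -(A * (δ / 2) ^ (m + 2)) := by
      have hp : (0:ℝ) ≤ A * (δ / 2) ^ (m + 2) := by positivity
      nlinarith [mul_nonneg hp (by linarith [habsc.2] : (0:ℝ) ≤ c + 1)]
    nlinarith
  have hsub := intermediate_value_Ioo (by positivity : (0:ℝ) ≤ δ / 2)
    hcont.continuousOn (a := (0:ℝ)) (b := δ / 2)
  obtain ⟨ρ, hρmem, hρeq⟩ := hsub ⟨hf0, hfhalf⟩
  have hρδ : ρ ∈ Set.Ioo (0:ℝ) δ := ⟨hρmem.1, hρmem.2.trans (by linarith)⟩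
  refine ⟨ρ, ⟨hρδ, hρeq⟩, ?_⟩
  rintro y ⟨hy, hyeq⟩
  rcases lt_trichotomy y ρ with h | h | h
  · exfalso
    have := hmono y ρ hy.1.le h hρδ.2.le
    rw [show (0:ℝ) = (fun ρ => μ + Ψ * ρ ^ 2 + A * ρ ^ (m + 2) * c) ρ from hρeq.symm] at hyeq
    simp only at hyeq
    linarith
  · exact h
  · exfalso
    have := hmono ρ y hρδ.1.le h hy.2.le
    rw [show (0:ℝ) = (fun ρ => μ + Ψ * ρ ^ 2 + A * ρ ^ (m + 2) * c) ρ from hρeq.symm] at hyeq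
    simp only at hyeq
    linarith

/-- For `q ≥ 5`, `A Ψ₁ > 0`, there are `δ > 0` and `μ₀ > 0` such that for every
`μ` with `μ Ψ₁ < 0` and `|μ| < μ₀` and each sign `c = ±1`, the equation
`μ + Ψ₁ ρ² + A ρ^(q-2) c = 0` has exactly one solution `ρ ∈ (0, δ)`
(so the system has exactly `2q` nonzero equilibria: one such `ρ` for each of
the `2q` angles `φ` with `sin(qφ) = 0`). -/
theorem resonance_equilibria_count (q : ℕ) (hq : 5 ≤ q) (A Ψ₁ : ℝ)
    (hAΨ : 0 < A * Ψ₁) :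
    ∃ δ > 0, ∃ μ₀ > 0, ∀ μ : ℝ, μ * Ψ₁ < 0 → |μ| < μ₀ →
      ∀ c : ℝ, c = 1 ∨ c = -1 →
        ∃! ρ : ℝ, ρ ∈ Set.Ioo 0 δ ∧ μ + Ψ₁ * ρ ^ 2 + A * ρ ^ (q - 2) * c = 0 := by
  have hq2 : q - 2 = (q - 4) + 2 := by omega
  have hm : 1 ≤ q - 4 := by omega
  rw [hq2]
  rcases lt_trichotomy Ψ₁ 0 with hΨ | hΨ | hΨ
  · have hA : A < 0 := by nlinarith
    obtain ⟨δ, hδ, μ₀, hμ₀, H⟩ := core (q - 4) hm (-A) (-Ψ₁) (by linarith) (by linarith)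
    refine ⟨δ, hδ, μ₀, hμ₀, ?_⟩
    intro μ hμΨ hμ c hc
    have hμpos : 0 < μ := by nlinarith
    obtain ⟨ρ, ⟨hmem, heq⟩, huniq⟩ :=
      H (-μ) (by linarith) (by rwa [abs_neg]) c hc
    refine ⟨ρ, ⟨hmem, by linarith⟩, ?_⟩
    rintro y ⟨hy, hyeq⟩
    exact huniq y ⟨hy, by linarith⟩
  · exfalso; simp [hΨ] at hAΨ
  · have hA : 0 < A := by nlinarith
    obtain ⟨δ, hδ, μ₀, hμ₀, H⟩ := core (q - 4) hm A Ψ₁ hA hΨ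
    refine ⟨δ, hδ, μ₀, hμ₀, ?_⟩
    intro μ hμΨ hμ c hc
    exact H μ (by nlinarith) hμ c hc
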